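/- Let q ∈ ℂ with q ≠ 0 and q² ≠ 1. For every function f : ℂ → ℂ and every z ∈ ℂ with z ≠ 0 and q^{2k}z² ≠ 1 for k ∈ {−1,0,1}, the q-difference operators Y, U, V satisfy the three-dimensional degenerate Sklyanin algebra relations: (V(Yf))(z) = q·(Y(Vf))(z), (Y(Uf))(z) = q·(U(Yf))(z), and (U(Vf))(z) − (V(Uf))(z) = (q − q⁻¹)·(Y(Yf))(z). -/

import Mathlib

set_option maxHeartbeats 1000000


noncomputable def Yop (q : ℂ) (f : ℂ → ℂ) (z : ℂ) : ℂ :=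
  (f (q * z) - f (q⁻¹ * z)) / (z - z⁻¹)

noncomputable def Uop (q : ℂ) (f : ℂ → ℂ) (z : ℂ) : ℂ :=
  (z * f (q * z) - z⁻¹ * f (q⁻¹ * z)) / (z - z⁻¹)

noncomputable def Vop (q : ℂ) (f : ℂ → ℂ) (z : ℂ) : ℂ :=
  (z * f (q⁻¹ * z) - z⁻¹ * f (q * z)) / (z - z⁻¹)

private lemma key {a : ℂ} (ha : a ≠ 0) (h : a - a⁻¹ = 0) : a ^ 2 = 1 := by
  have h1 := sub_eq_zero.mp h
  have h2 : a * a = 1 := by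
    nth_rewrite 2 [h1]
    exact mul_inv_cancel₀ ha
  linear_combination h2

/-- the realization `Y, U, V` satisfies the relations of the
three-dimensional degenerate Sklyanin algebra `ska₃`, pointwise. -/
theorem ska3_relations (q : ℂ) (hq : q ≠ 0) (hq2 : q ^ 2 ≠ 1)
    (f : ℂ → ℂ) (z : ℂ) (hz : z ≠ 0)
    (h0 : z ^ 2 ≠ 1) (h1 : q ^ 2 * z ^ 2 ≠ 1) (hm1 : q⁻¹ ^ 2 * z ^ 2 ≠ 1) :
    Vop q (Yop q f) z = q * Yop q (Vop q f) z ∧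
    Yop q (Uop q f) z = q * Uop q (Yop q f) z ∧
    Uop q (Vop q f) z - Vop q (Uop q f) z = (q - q⁻¹) * Yop q (Yop q f) z := by
  have hq' : q⁻¹ ≠ 0 := inv_ne_zero hq
  have hA : z ^ 2 - 1 ≠ 0 := sub_ne_zero.mpr h0
  have hB : q ^ 2 * z ^ 2 - 1 ≠ 0 := sub_ne_zero.mpr h1
  have hC : z ^ 2 - q ^ 2 ≠ 0 := by
    intro h
    apply hm1
    have hz2 : z ^ 2 = q ^ 2 := sub_eq_zero.mp h
    field_simp [hz2]
    exact hz2
  have e1 : q⁻¹ * (q * z) = z := by field_simp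
  have e2 : q * (q⁻¹ * z) = z := by field_simp
  have r0 : z - z⁻¹ = (z ^ 2 - 1) / z := by field_simp
  have r1 : q * z - (q * z)⁻¹ = (q ^ 2 * z ^ 2 - 1) / (q * z) := by
    field_simp
  have rm1 : q⁻¹ * z - (q⁻¹ * z)⁻¹ = (z ^ 2 - q ^ 2) / (q * z) := by
    field_simp
  -- closed forms at q*z
  have hY1 : Yop q f (q * z) =
      q * z * (f (q * (q * z)) - f z) / (q ^ 2 * z ^ 2 - 1) := by
    rw [Yop, e1, r1]; field_simp
  have hU1 : Uop q f (q * z) =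
      (q ^ 2 * z ^ 2 * f (q * (q * z)) - f z) / (q ^ 2 * z ^ 2 - 1) := by
    rw [Uop, e1, r1]; field_simp
  have hV1 : Vop q f (q * z) =
      (q ^ 2 * z ^ 2 * f z - f (q * (q * z))) / (q ^ 2 * z ^ 2 - 1) := by
    rw [Vop, e1, r1]; field_simp
  -- closed forms at q⁻¹*z
  have hYm : Yop q f (q⁻¹ * z) =
      q * z * (f z - f (q⁻¹ * (q⁻¹ * z))) / (z ^ 2 - q ^ 2) := by
    rw [Yop, e2, rm1]; field_simp
  have hUm : Uop q f (q⁻¹ * z) =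
      (z ^ 2 * f z - q ^ 2 * f (q⁻¹ * (q⁻¹ * z))) / (z ^ 2 - q ^ 2) := by
    rw [Uop, e2, rm1]; field_simp
  have hVm : Vop q f (q⁻¹ * z) =
      (z ^ 2 * f (q⁻¹ * (q⁻¹ * z)) - q ^ 2 * f z) / (z ^ 2 - q ^ 2) := by
    rw [Vop, e2, rm1]; field_simp
  refine ⟨?_, ?_, ?_⟩
  · rw [show Vop q (Yop q f) z = (z * Yop q f (q⁻¹ * z) - z⁻¹ * Yop q f (q * z)) / (z - z⁻¹) from rfl,
      show Yop q (Vop q f) z = (Vop q f (q * z) - Vop q f (q⁻¹ * z)) / (z - z⁻¹) from rfl,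
      hY1, hYm, hV1, hVm, r0]
    field_simp [hA, hB, hC, show z ^ 2 * q ^ 2 - 1 ≠ 0 by rwa [mul_comm]]
    ring
  · rw [show Yop q (Uop q f) z = (Uop q f (q * z) - Uop q f (q⁻¹ * z)) / (z - z⁻¹) from rfl,
      show Uop q (Yop q f) z = (z * Yop q f (q * z) - z⁻¹ * Yop q f (q⁻¹ * z)) / (z - z⁻¹) from rfl,
      hY1, hYm, hU1, hUm, r0]
    field_simp [hA, hB, hC]
    ring
  · rw [show Uop q (Vop q f) z = (z * Vop q f (q * z) - z⁻¹ * Vop q f (q⁻¹ * z)) / (z - z⁻¹) from rfl,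
      show Vop q (Uop q f) z = (z * Uop q f (q⁻¹ * z) - z⁻¹ * Uop q f (q * z)) / (z - z⁻¹) from rfl,
      show Yop q (Yop q f) z = (Yop q f (q * z) - Yop q f (q⁻¹ * z)) / (z - z⁻¹) from rfl,
      hY1, hYm, hU1, hUm, hV1, hVm, div_sub_div_same]
    conv_rhs => rw [← mul_div_assoc]
    congr 1
    field_simp [hB, hC, show z ^ 2 * q ^ 2 - 1 ≠ 0 by rwa [mul_comm]]
    ring
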